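/- Let c*, h*, V_tot be positive constants and let R, U : I → ℝ be differentiable on an interval I with R'(t) = U(t), (V_tot − π·R(t)²·h*)·U'(t) = 2π·R(t)·h*·(U(t)² − c*²), c*² − U(t)² > 0 and V_tot − π·R(t)²·h* > 0 for all t ∈ I. Then the Hamiltonian H(t) = −(1/2)·log( c*² − U(t)² ) − log( V_tot − π·R(t)²·h* ) is constant on I. -/

import Mathlib

open Real

/-- For the Regime-2 rim-lamella system `R' = U`,
`(V_tot − πR²h*)·U' = 2πRh*·(U² − c*²)` on an interval `I` where `c*² − U² > 0` and
`V_tot − πR²h* > 0`, the Hamiltonian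
`H = −(1/2)·log(c*² − U²) − log(V_tot − πR²h*)` is constant on `I`. -/
theorem regime2_hamiltonian_constant
    (cstar hstar Vtot : ℝ) (hc : cstar > 0) (hh : hstar > 0) (hV : Vtot > 0)
    (I : Set ℝ) (hI : I.OrdConnected)
    (R U : ℝ → ℝ)
    (hR : ∀ t ∈ I, HasDerivAt R (U t) t)
    (hU : ∀ t ∈ I, DifferentiableAt ℝ U t)
    (hmom : ∀ t ∈ I,
      (Vtot - π * R t ^ 2 * hstar) * deriv U t
        = 2 * π * R t * hstar * (U t ^ 2 - cstar ^ 2))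
    (hU2 : ∀ t ∈ I, cstar ^ 2 - U t ^ 2 > 0)
    (hV2 : ∀ t ∈ I, Vtot - π * R t ^ 2 * hstar > 0) :
    ∀ s ∈ I, ∀ t ∈ I,
      -(1 / 2) * Real.log (cstar ^ 2 - U s ^ 2)
          - Real.log (Vtot - π * R s ^ 2 * hstar)
        = -(1 / 2) * Real.log (cstar ^ 2 - U t ^ 2)
          - Real.log (Vtot - π * R t ^ 2 * hstar) := by
  set H : ℝ → ℝ := fun x =>
    -(1 / 2) * Real.log (cstar ^ 2 - U x ^ 2)
      - Real.log (Vtot - π * R x ^ 2 * hstar) with hHdef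
  have key : ∀ t ∈ I, HasDerivAt H 0 t := by
    intro t ht
    have hUd : HasDerivAt U (deriv U t) t := (hU t ht).hasDerivAt
    set u' := deriv U t
    have h1 : HasDerivAt (fun x => cstar ^ 2 - U x ^ 2) (-(2 * U t * u')) t := by
      have := (hasDerivAt_const t (cstar ^ 2)).fun_sub (hUd.pow 2)
      simpa [mul_comm, mul_assoc, mul_left_comm] using this
    have h2 := h1.log (ne_of_gt (hU2 t ht))
    have h3 : HasDerivAt (fun x => Vtot - π * R x ^ 2 * hstar)
        (-(π * (2 * R t * U t) * hstar)) t := by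
      have := (hasDerivAt_const t Vtot).fun_sub
        ((((hR t ht).pow 2).const_mul π).mul_const hstar)
      simpa [mul_comm, mul_assoc, mul_left_comm] using this
    have h4 := h3.log (ne_of_gt (hV2 t ht))
    have hD := (h2.const_mul (-(1 / 2) : ℝ)).fun_sub h4
    have hA := hU2 t ht
    have hB := hV2 t ht
    have hm := hmom t ht
    have hval : -(1 / 2) * (-(2 * U t * u') / (cstar ^ 2 - U t ^ 2))
        - -(π * (2 * R t * U t) * hstar) / (Vtot - π * R t ^ 2 * hstar) = 0 := by
      field_simp
      linear_combination U t * hm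
    have : HasDerivAt H 0 t := by
      rw [hHdef]
      simpa only [hval] using hD
    exact this
  have main : ∀ s ∈ I, ∀ t ∈ I, s ≤ t → H s = H t := by
    intro s hs t ht hst
    have hsub : Set.Icc s t ⊆ I := hI.out hs ht
    have hcont : ContinuousOn H (Set.Icc s t) := fun x hx =>
      (key x (hsub hx)).continuousAt.continuousWithinAt
    have := constant_of_has_deriv_right_zero hcont (fun x hx =>
      (key x (hsub (Set.Ico_subset_Icc_self hx))).hasDerivWithinAt)
    exact (this t (Set.right_mem_Icc.2 hst)).symm
  intro s hs t ht
  rcases le_total s t with h | h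
  · exact main s hs t ht h
  · exact (main t ht s hs h).symm
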